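/- Under the deterministic μ-dichotomy hypotheses, with x_n := x_n^{(s)} + x_n^{(u)} defined by the stable and unstable Green-function sums as above, the sequence (x_n) satisfies x_{n+1} = A_{ℓ+n} x_n + φ_{ℓ+n+1}^{−1} y_{n+1} for all n ∈ ℤ⁺, where A_{ℓ+n} = Φ(1, ℓ+n). -/

import Mathlib

/-- The Green-function solution x_n = x_n^{(s)} + x_n^{(u)} satisfies the inhomogeneous
difference equation x_{n+1} = A_{ℓ+n} x_n + φ_{ℓ+n+1}⁻¹ y_{n+1}. -/
theorem stmt18 {X : Type*} [NormedAddCommGroup X] [NormedSpace ℝ X] [CompleteSpace X]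
    (μ : ℕ → ℝ) (η : ℝ)
    (hpos : ∀ n, 0 < μ n)
    (hmono : StrictMono μ)
    (htend : Filter.Tendsto μ Filter.atTop Filter.atTop)
    (hη : 1 ≤ η) (hgrow : ∀ n, μ (n + 1) ≤ η * μ n)
    (A : ℕ → X →L[ℝ] X) (Φ : ℕ → ℕ → X →L[ℝ] X)
    (hΦ0 : ∀ m, Φ 0 m = 1) (hΦs : ∀ n m, Φ (n + 1) m = (A (m + n)).comp (Φ n m))
    (P : ℕ → X →L[ℝ] X)
    (Ψ : ℕ → ℕ → X →L[ℝ] X) (hΨ0 : ∀ m, Ψ 0 m = 1)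
    (hAΨ : ∀ j m, (A m).comp ((Ψ (j + 1) (m + j + 1)).comp
        ((1 : X →L[ℝ] X) - P (m + j + 1))) =
      (Ψ j (m + j + 1)).comp ((1 : X →L[ℝ] X) - P (m + j + 1)))
    (ℓ : ℕ) (y : ℕ → X) (hy0 : y 0 = 0)
    (xs xu x : ℕ → X)
    (hxs : ∀ n, xs n = ∑ k ∈ Finset.range (n + 1),
      ((μ (ℓ + k + 1) - μ (ℓ + k)) / μ (ℓ + k)) • Φ (n - k) (ℓ + k) (P (ℓ + k) (y k)))
    (hsum : ∀ n, Summable (fun j : ℕ =>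
      ((μ (ℓ + n + j + 2) - μ (ℓ + n + j + 1)) / μ (ℓ + n + j + 1)) •
        Ψ (j + 1) (ℓ + n + j + 1)
          (((1 : X →L[ℝ] X) - P (ℓ + n + j + 1)) (y (n + j + 1)))))
    (hxu : ∀ n, xu n = -∑' j : ℕ,
      ((μ (ℓ + n + j + 2) - μ (ℓ + n + j + 1)) / μ (ℓ + n + j + 1)) •
        Ψ (j + 1) (ℓ + n + j + 1)
          (((1 : X →L[ℝ] X) - P (ℓ + n + j + 1)) (y (n + j + 1))))
    (hx : ∀ n, x n = xs n + xu n) :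
    ∀ n, x (n + 1) = A (ℓ + n) (x n) +
      ((μ (ℓ + n + 2) - μ (ℓ + n + 1)) / μ (ℓ + n + 1)) • y (n + 1) := by
  intro n
  set c : ℝ := (μ (ℓ + n + 2) - μ (ℓ + n + 1)) / μ (ℓ + n + 1) with hc
  -- stable part
  have hs : xs (n + 1) = A (ℓ + n) (xs n) + c • P (ℓ + n + 1) (y (n + 1)) := by
    rw [hxs, hxs, Finset.sum_range_succ, map_sum]
    congr 1
    · apply Finset.sum_congr rfl
      intro k hk
      have hk' : k ≤ n := Nat.lt_succ_iff.mp (Finset.mem_range.mp hk)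
      have h1 : n + 1 - k = (n - k) + 1 := by omega
      have h2 : ℓ + k + (n - k) = ℓ + n := by omega
      rw [h1, hΦs, map_smul, h2]
      rfl
    · have h0 : n + 1 - (n + 1) = 0 := by omega
      have e1 : ℓ + (n + 1) + 1 = ℓ + n + 2 := by omega
      have e2 : ℓ + (n + 1) = ℓ + n + 1 := by omega
      rw [h0, hΦ0, e1, e2, ContinuousLinearMap.one_apply, hc]
  -- key pointwise identity for the unstable part
  have key : ∀ j : ℕ, A (ℓ + n) (((μ (ℓ + n + j + 2) - μ (ℓ + n + j + 1)) / μ (ℓ + n + j + 1)) •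
        Ψ (j + 1) (ℓ + n + j + 1) (((1 : X →L[ℝ] X) - P (ℓ + n + j + 1)) (y (n + j + 1)))) =
      ((μ (ℓ + n + j + 2) - μ (ℓ + n + j + 1)) / μ (ℓ + n + j + 1)) •
        Ψ j (ℓ + n + j + 1) (((1 : X →L[ℝ] X) - P (ℓ + n + j + 1)) (y (n + j + 1))) := by
    intro j
    rw [map_smul]
    congr 1
    have h := congrArg (fun T : X →L[ℝ] X => T (y (n + j + 1))) (hAΨ j (ℓ + n))
    simpa using h
  set g : ℕ → X := fun j => ((μ (ℓ + n + j + 2) - μ (ℓ + n + j + 1)) / μ (ℓ + n + j + 1)) •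
        Ψ j (ℓ + n + j + 1) (((1 : X →L[ℝ] X) - P (ℓ + n + j + 1)) (y (n + j + 1))) with hg
  have hsummap : Summable g := by
    have h := (hsum n).map ((A (ℓ + n)).toLinearMap.toAddMonoidHom) (A (ℓ + n)).continuous
    exact h.congr key
  have hu : xu (n + 1) = A (ℓ + n) (xu n) + c • (((1 : X →L[ℝ] X) - P (ℓ + n + 1)) (y (n + 1))) := by
    rw [hxu, hxu, map_neg, (A (ℓ + n)).map_tsum (hsum n), tsum_congr key,
      Summable.tsum_eq_zero_add hsummap]
    have hg0 : g 0 = c • (((1 : X →L[ℝ] X) - P (ℓ + n + 1)) (y (n + 1))) := by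
      have e1 : ℓ + n + 0 + 2 = ℓ + n + 2 := by omega
      have e2 : ℓ + n + 0 + 1 = ℓ + n + 1 := by omega
      have e3 : n + 0 + 1 = n + 1 := by omega
      rw [hg]
      simp only [e1, e2, e3, hΨ0, ContinuousLinearMap.one_apply, hc]
    have htail : ∑' j : ℕ,
        ((μ (ℓ + (n + 1) + j + 2) - μ (ℓ + (n + 1) + j + 1)) / μ (ℓ + (n + 1) + j + 1)) •
          Ψ (j + 1) (ℓ + (n + 1) + j + 1)
            (((1 : X →L[ℝ] X) - P (ℓ + (n + 1) + j + 1)) (y (n + 1 + j + 1))) =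
        ∑' j : ℕ, g (j + 1) := by
      apply tsum_congr
      intro j
      have e1 : ℓ + (n + 1) + j + 2 = ℓ + n + (j + 1) + 2 := by omega
      have e2 : ℓ + (n + 1) + j + 1 = ℓ + n + (j + 1) + 1 := by omega
      have e3 : n + 1 + j + 1 = n + (j + 1) + 1 := by omega
      rw [hg, e1, e2, e3]
    rw [htail, hg0]
    abel
  rw [hx, hx, hs, hu, map_add]
  have : c • P (ℓ + n + 1) (y (n + 1)) + c • (((1 : X →L[ℝ] X) - P (ℓ + n + 1)) (y (n + 1)))
      = c • y (n + 1) := by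
    rw [← smul_add]
    congr 1
    simp [ContinuousLinearMap.sub_apply]
  rw [show A (ℓ + n) (xs n) + c • P (ℓ + n + 1) (y (n + 1)) +
      (A (ℓ + n) (xu n) + c • (((1 : X →L[ℝ] X) - P (ℓ + n + 1)) (y (n + 1)))) =
      A (ℓ + n) (xs n) + A (ℓ + n) (xu n) +
      (c • P (ℓ + n + 1) (y (n + 1)) + c • (((1 : X →L[ℝ] X) - P (ℓ + n + 1)) (y (n + 1)))) by abel,
    this]
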